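/- arXiv:2103.09443 — 2 statements merged into one kernel-verified Lean document; each statement's English description precedes it below -/
import Mathlib

section
/- Let ω be a word of length 2k with b distinct letters such that |Π(ω)|/n^{b+1} → 1 as n → ∞. Then: (i) the last new letter of ω appears only in pure blocks (maximal consecutive strings of the same letter) of even sizes; (ii) for circuits π ∈ Π(ω) in which the b+1 vertex classes are distinct, any two successive occurrences of the same letter, at positions i < j, obey the (C2) constraint, i.e. π(i−1) = π(j) and π(i) = π(j−1); and (iii) between any two successive occurrences of any letter, every other letter appears an equal number of times in odd and in even positions. Consequently ω is a special symmetric word, i.e. the partition corresponding to ω lies in SS(2k). -/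
open MeasureTheory ProbabilityTheory Filter Finset
open scoped BigOperators ENNReal NNReal Topology Classical

noncomputable section

/-- The empirical spectral distribution of a matrix: `(1/n) ∑ δ_{λ_i}` where the `λ_i`
are the eigenvalues (for a Hermitian, i.e. real symmetric, matrix); junk value `0`
for non-Hermitian matrices. -/
noncomputable def esdOfMatrix {n : ℕ} (A : Matrix (Fin n) (Fin n) ℝ) : Measure ℝ :=
  if h : A.IsHermitian then ((n : ℝ≥0∞))⁻¹ • ∑ i : Fin n, Measure.dirac (h.eigenvalues i)
  else 0

/-- Weak convergence of a sequence of measures on `ℝ`. -/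
def WeakLim (μs : ℕ → Measure ℝ) (ν : Measure ℝ) : Prop :=
  ∀ f : BoundedContinuousFunction ℝ ℝ,
    Tendsto (fun n => ∫ t, f t ∂(μs n)) atTop (𝓝 (∫ t, f t ∂ν))

/-- `P` is a partition of `{1, …, m}`. -/
def IsPartitionOf (m : ℕ) (P : Finset (Finset ℕ)) : Prop :=
  (∀ B ∈ P, B.Nonempty) ∧ (∀ B ∈ P, B ⊆ Finset.Icc 1 m) ∧
  (∀ B ∈ P, ∀ B' ∈ P, B ≠ B' → Disjoint B B') ∧
  (∀ i ∈ Finset.Icc 1 m, ∃ B ∈ P, i ∈ B)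

/-- The block of the partition `P` containing `a` (junk value `∅` if there is none). -/
noncomputable def partOf (P : Finset (Finset ℕ)) (a : ℕ) : Finset ℕ :=
  (P.filter fun B => a ∈ B).sup id

/-- `B` is a union of pairwise disjoint sets of consecutive integers, each of even size. -/
def IsEvenIntervalUnion (B : Finset ℕ) : Prop :=
  ∃ S : Finset (ℕ × ℕ),
    (∀ p ∈ S, p.1 ≤ p.2 ∧ Even (Finset.Icc p.1 p.2).card) ∧
    (∀ p ∈ S, ∀ q ∈ S, p ≠ q → Disjoint (Finset.Icc p.1 p.2) (Finset.Icc q.1 q.2)) ∧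
    B = S.sup fun p => Finset.Icc p.1 p.2

/-- A partition of `{1, …, m}` is special symmetric if (i) its last block (the block whose
least element is the largest) is a union of even-sized sets of consecutive integers, and
(ii) between any two successive elements of any block, any other block has an even number
of elements, appearing an equal number of times in odd and in even positions. -/
def IsSpecialSymmetric (m : ℕ) (P : Finset (Finset ℕ)) : Prop :=
  IsPartitionOf m P ∧
  (∀ B ∈ P, (∀ B' ∈ P, B' ≠ B → ∃ a ∈ B', ∀ c ∈ B, a < c) → IsEvenIntervalUnion B) ∧
  (∀ B ∈ P, ∀ i ∈ B, ∀ j ∈ B, i < j → (∀ l ∈ B, ¬(i < l ∧ l < j)) →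
    ∀ B' ∈ P, B' ≠ B →
      Even ((B'.filter fun l => i < l ∧ l < j).card) ∧
      (B'.filter fun l => i < l ∧ l < j ∧ Odd l).card
        = (B'.filter fun l => i < l ∧ l < j ∧ Even l).card)

/-- The finite set of all partitions of `{1, …, m}`. -/
noncomputable def partitionFinset (m : ℕ) : Finset (Finset (Finset ℕ)) :=
  ((Finset.Icc 1 m).powerset.powerset).filter (IsPartitionOf m)

/-- The finite set `SS(m)` of special symmetric partitions of `{1, …, m}`. -/
noncomputable def SSFinset (m : ℕ) : Finset (Finset (Finset ℕ)) :=
  ((Finset.Icc 1 m).powerset.powerset).filter (IsSpecialSymmetric m)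

/-- The finite set `SS_b(m)`: special symmetric partitions of `{1, …, m}` with `b` blocks. -/
noncomputable def SSbFinset (m b : ℕ) : Finset (Finset (Finset ℕ)) :=
  (SSFinset m).filter fun P => P.card = b

/-- The positions in `{1, …, m}` of first occurrences of the letters of the word of `P`. -/
noncomputable def firstOccs (m : ℕ) (P : Finset (Finset ℕ)) : Finset ℕ :=
  (Finset.Icc 1 m).filter fun i => ∀ i' ∈ Finset.Icc 1 m, i' < i → partOf P i' ≠ partOf P i

/-- The position `i_j` of the first occurrence of the `j`-th distinct letter (`1`-indexed)
of the word of the partition `P`. -/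
noncomputable def iPos (m : ℕ) (P : Finset (Finset ℕ)) (j : ℕ) : ℕ :=
  ((firstOccs m P).sort (· ≤ ·)).getD (j - 1) 0

/-- The basic identifications of the vertices `{0, 1, …, m}` of a circuit forced by the
`(C2)` constraints between successive occurrences of the same letter of the word of `P`,
together with the circuit condition identifying the vertices `0` and `m`. -/
def C2Rel (m : ℕ) (P : Finset (Finset ℕ)) : ℕ → ℕ → Prop := fun u v =>
  (u = 0 ∧ v = m) ∨
  ∃ i ∈ Finset.Icc 1 m, ∃ j ∈ Finset.Icc 1 m, i < j ∧ partOf P i = partOf P j ∧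
    (∀ l ∈ Finset.Icc 1 m, i < l → l < j → partOf P l ≠ partOf P i) ∧
    ((u = i - 1 ∧ v = j) ∨ (u = i ∧ v = j - 1))

/-- The equivalence of the vertices `{0, 1, …, m}` generated by the `(C2)` identifications:
its classes are the vertex classes of (circuits of) the word of `P`. -/
def vertexEquiv (m : ℕ) (P : Finset (Finset ℕ)) : ℕ → ℕ → Prop :=
  Relation.EqvGen (C2Rel m P)

/-- The label in `{0, 1, …, b}` of the vertex class of a vertex `v`: the class of the
vertex `0` is labelled `0`, and the class of the generating vertex `i_j` of the `j`-th
distinct letter is labelled `j`. -/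
noncomputable def labOf (m : ℕ) (P : Finset (Finset ℕ)) (v : ℕ) : ℕ :=
  if vertexEquiv m P v 0 then 0
  else sInf {j : ℕ | 1 ≤ j ∧ vertexEquiv m P v (iPos m P j)}

open Fin.NatCast in
/-- The contribution `∫_{[0,1]^{b+1}} ∏_{j=1}^b g_{s_j}(x_{t_j}, x_{l_j}) dx` of a
special symmetric partition `P` of `{1, …, m}` with `b` blocks, where `s_j` is the size of
the `j`-th block of `P` and `(t_j, l_j)` (with `l_j = j`) are the labels of the vertex
classes of the two endpoints of the first occurrence of the `j`-th letter. -/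
noncomputable def ssIntegral (g : ℕ → ℝ → ℝ → ℝ) (m b : ℕ) (P : Finset (Finset ℕ)) : ℝ :=
  ∫ xv : Fin (b + 1) → ℝ in Set.univ.pi fun _ => Set.Icc (0 : ℝ) 1,
    ∏ j ∈ Finset.Icc 1 b,
      g ((partOf P (iPos m P j)).card)
        (xv ((labOf m P (iPos m P j - 1) : ℕ) : Fin (b + 1)))
        (xv ((j : ℕ) : Fin (b + 1)))

/-- A bounded Riemann integrable function on `[0,1]²`: bounded, and (by Lebesgue's
criterion) almost everywhere continuous on the square. -/
def BoundedRiemann (f : ℝ → ℝ → ℝ) : Prop :=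
  (∃ C, ∀ a ∈ Set.Icc (0 : ℝ) 1, ∀ b ∈ Set.Icc (0 : ℝ) 1, |f a b| ≤ C) ∧
  ∀ᵐ p ∂(volume.restrict (Set.Icc (0 : ℝ) 1 ×ˢ Set.Icc (0 : ℝ) 1)),
    ContinuousWithinAt (fun q : ℝ × ℝ => f q.1 q.2) (Set.Icc (0 : ℝ) 1 ×ˢ Set.Icc (0 : ℝ) 1) p

/-- The truncated entry `x_{ij,n} 1_{{|x_{ij,n}| ≤ t_n}}` (with `t_n ∈ [0,∞]`). -/
noncomputable def trunc {Ω : Type*} (x : ℕ → ℕ → ℕ → Ω → ℝ) (t : ℕ → ℝ≥0∞)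
    (n i j : ℕ) (ω : Ω) : ℝ :=
  if ENNReal.ofReal |x n i j ω| ≤ t n then x n i j ω else 0

/-- The `n × n` matrix with `(i,j)` entry `e i j ω` (`1`-indexed). -/
noncomputable def matOf {Ω : Type*} (e : ℕ → ℕ → ℕ → Ω → ℝ) (n : ℕ) (ω : Ω) :
    Matrix (Fin n) (Fin n) ℝ :=
  Matrix.of fun i j : Fin n => e n ((i : ℕ) + 1) ((j : ℕ) + 1) ω

/-- `M_s = ‖g_s‖_∞` on `[0,1]²` for even `s`, and `M_s = 0` for odd `s`. -/
noncomputable def Msup (g : ℕ → ℝ → ℝ → ℝ) (s : ℕ) : ℝ :=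
  if Even s then
    sSup {r : ℝ | ∃ a ∈ Set.Icc (0 : ℝ) 1, ∃ b ∈ Set.Icc (0 : ℝ) 1, r = |g s a b|}
  else 0

/-- `α_{2k} = ∑_{σ ∈ P(2k)} M_σ`, the multiplicative extension of `M` summed over all
partitions of `{1, …, 2k}`. -/
noncomputable def alphaSeq (g : ℕ → ℝ → ℝ → ℝ) (k : ℕ) : ℝ :=
  ∑ P ∈ partitionFinset (2 * k), ∏ B ∈ P, Msup g B.card

/-- Carleman's condition `∑_k β_{2k}^{-1/(2k)} = ∞` for a (moment) sequence `β`. -/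
def CarlemanCond (β : ℕ → ℝ) : Prop :=
  Tendsto (fun N => ∑ k ∈ Finset.Icc 1 N, β (2 * k) ^ (-(1 : ℝ) / (2 * k))) atTop atTop

/-- Assumption A of Bose, Saha, Sen and Sen, "Random matrices with independent entries:
beyond non-crossing partitions". -/
structure AssumptionA {Ω : Type*} [MeasurableSpace Ω] (μpr : Measure Ω)
    (x : ℕ → ℕ → ℕ → Ω → ℝ) (t : ℕ → ℝ≥0∞) (gn : ℕ → ℕ → ℝ → ℝ → ℝ)
    (g : ℕ → ℝ → ℝ → ℝ) : Prop where
  meas : ∀ n i j, Measurable (x n i j)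
  symm : ∀ n i j ω, x n i j ω = x n j i ω
  indep : ∀ n, iIndepFun
    (fun p : {p : ℕ × ℕ // 1 ≤ p.1 ∧ p.1 ≤ p.2 ∧ p.2 ≤ n} => x n p.1.1 p.1.2) μpr
  bddRiemann : ∀ k n : ℕ, 1 ≤ k → BoundedRiemann (gn (2 * k) n)
  momEven : ∀ k n i j : ℕ, 1 ≤ k → 1 ≤ i → i ≤ j → j ≤ n →
    (n : ℝ) * ∫ ω, trunc x t n i j ω ^ (2 * k) ∂μpr = gn (2 * k) n (i / n) (j / n)
  momOdd : ∀ k : ℕ, 1 ≤ k → ∀ α : ℝ, α < 1 →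
    Tendsto (fun n : ℕ => (n : ℝ) ^ α *
      ⨆ p : {p : ℕ × ℕ // 1 ≤ p.1 ∧ p.1 ≤ p.2 ∧ p.2 ≤ n},
        |∫ ω, trunc x t n p.1.1 p.1.2 ω ^ (2 * k - 1) ∂μpr|) atTop (𝓝 0)
  unif : ∀ k : ℕ, 1 ≤ k → TendstoUniformlyOn (fun n p => gn (2 * k) n p.1 p.2)
    (fun p => g (2 * k) p.1 p.2) atTop (Set.Icc 0 1 ×ˢ Set.Icc 0 1)
  carleman : CarlemanCond (alphaSeq g)


/-- Convergence in probability of real random variables to a constant. -/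
def TendstoInProbability {Ω : Type*} [MeasurableSpace Ω] (μpr : Measure Ω)
    (Z : ℕ → Ω → ℝ) (c : ℝ) : Prop :=
  ∀ ε : ℝ, 0 < ε → Tendsto (fun n => μpr {ω | ε ≤ |Z n ω - c|}) atTop (𝓝 0)

/-- The semicircular distribution with variance `c`: density `(2πc)⁻¹ √(4c − x²)`
on `[−2√c, 2√c]`. -/
noncomputable def semicircularMeasure (c : ℝ) : Measure ℝ :=
  volume.withDensity fun s =>
    ENNReal.ofReal ((Set.Icc (-(2 * Real.sqrt c)) (2 * Real.sqrt c)).indicator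
      (fun u => (2 * Real.pi * c)⁻¹ * Real.sqrt (4 * c - u ^ 2)) s)

/-- The squared `L²`-Wasserstein distance between two probability measures on `ℝ`:
the infimum over all couplings of the expected squared difference. -/
noncomputable def d2sq (μ ν : Measure ℝ) : ℝ :=
  sInf {r : ℝ | ∃ ρ : Measure (ℝ × ℝ), IsProbabilityMeasure ρ ∧
    ρ.map Prod.fst = μ ∧ ρ.map Prod.snd = ν ∧
    Integrable (fun q : ℝ × ℝ => (q.1 - q.2) ^ 2) ρ ∧
    r = ∫ q : ℝ × ℝ, (q.1 - q.2) ^ 2 ∂ρ}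

/-- Extension of a vertex function `Fin (m+1) → Fin n` to all of `ℕ` (by reduction
mod `m+1`); positions `0, …, m` are the only ones which are used. -/
def extFin {m n : ℕ} (v : Fin (m + 1) → Fin n) (i : ℕ) : Fin n :=
  v ⟨i % (m + 1), Nat.mod_lt i (Nat.succ_pos m)⟩

/-- The class `Π(ω)` of circuits of length `m` with values in `{1, …, n}` (encoded as
`Fin n`) associated with the word (partition) `P` of `{1, …, m}`: circuits `π` with
`π(0) = π(m)` such that `ω[i] = ω[j] ⟺ {π(i−1), π(i)} = {π(j−1), π(j)}` as unordered
pairs. -/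
noncomputable def circuitsOf (m : ℕ) (P : Finset (Finset ℕ)) (n : ℕ) :
    Finset (Fin (m + 1) → Fin n) :=
  Finset.univ.filter fun v =>
    extFin v m = extFin v 0 ∧
    ∀ i ∈ Finset.Icc 1 m, ∀ j ∈ Finset.Icc 1 m,
      (partOf P i = partOf P j ↔
        ({extFin v (i - 1), extFin v i} : Finset (Fin n)) = {extFin v (j - 1), extFin v j})

/-- The (unordered) edge of the circuit `v` at position `i`. -/
noncomputable def edgeOf {k n : ℕ} (v : Fin (k + 1) → Fin n) (i : ℕ) : Finset (Fin n) :=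
  {extFin v (i - 1), extFin v i}

/-- Quadruples of circuits of length `k` with values in `{1, …, n}` that are jointly
matched and cross matched, with exactly `b` distinct edges in total. -/
noncomputable def quadCircuits (k n b : ℕ) : Finset (Fin 4 → Fin (k + 1) → Fin n) :=
  Finset.univ.filter fun q =>
    (∀ c : Fin 4, extFin (q c) k = extFin (q c) 0) ∧
    (∀ c : Fin 4, ∀ i ∈ Finset.Icc 1 k,
      2 ≤ ∑ c' : Fin 4,
        ((Finset.Icc 1 k).filter fun i' => edgeOf (q c') i' = edgeOf (q c) i).card) ∧
    (∀ c : Fin 4, ∃ i ∈ Finset.Icc 1 k, ∃ c' : Fin 4, c' ≠ c ∧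
      ∃ i' ∈ Finset.Icc 1 k, edgeOf (q c') i' = edgeOf (q c) i) ∧
    ((Finset.univ : Finset (Fin 4)).biUnion
      (fun c => (Finset.Icc 1 k).image fun i => edgeOf (q c) i)).card = b

/-- `P` is a pair-partition: every block has exactly two elements. -/
def IsPairPartition (P : Finset (Finset ℕ)) : Prop := ∀ B ∈ P, B.card = 2

/-- `P` has a crossing: there are `a < b < c < d` with `a, c` in one block and `b, d`
in a different block. -/
def HasCrossing (P : Finset (Finset ℕ)) : Prop :=
  ∃ a b c d : ℕ, a < b ∧ b < c ∧ c < d ∧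
    ∃ B ∈ P, ∃ B' ∈ P, B ≠ B' ∧ a ∈ B ∧ c ∈ B ∧ b ∈ B' ∧ d ∈ B'

/-- `a` is an ancestor of `v` (or equal to it) for the parent function `p`. -/
def ancRel (p : ℕ → ℕ) (a v : ℕ) : Prop := ∃ s : ℕ, p^[s] v = a

/-- `(p, c)` encodes a colored rooted plane tree with vertices `0, 1, …, k` (the root
being `0`) and colors `0, 1, …, b` (the root having color `0`): `p` is the parent
function and `c` the coloring.  The vertices are labelled in depth-first order, left to
right (which encodes the plane structure); every color is used; two vertices of the same
color have parents of the same color, and are at the same distance from the root. -/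
def IsColoredTree (k b : ℕ) (p c : ℕ → ℕ) : Prop :=
  p 0 = 0 ∧ (∀ v, k < v → p v = 0) ∧
  (∀ v, 1 ≤ v → v ≤ k → p v < v) ∧
  (∀ v, 2 ≤ v → v ≤ k → ancRel p (p v) (v - 1)) ∧
  c 0 = 0 ∧ (∀ v, k < v → c v = 0) ∧
  (∀ v, 1 ≤ v → v ≤ k → 1 ≤ c v ∧ c v ≤ b) ∧
  (∀ j, 1 ≤ j → j ≤ b → ∃ v, 1 ≤ v ∧ v ≤ k ∧ c v = j) ∧
  (∀ u v, 1 ≤ u → u ≤ k → 1 ≤ v → v ≤ k → c u = c v → c (p u) = c (p v)) ∧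
  (∀ u v, 1 ≤ u → u ≤ k → 1 ≤ v → v ≤ k → c u = c v →
    ∀ s : ℕ, (p^[s] u = 0 ↔ p^[s] v = 0))

/-- The number `|E(i,j)|` of edges of the colored tree `(p, c)` whose endpoints have
colors `i` and `j`. -/
noncomputable def edgeColorCount (k : ℕ) (p c : ℕ → ℕ) (i j : ℕ) : ℕ :=
  ((Finset.Icc 1 k).filter fun v => (c v = j ∧ c (p v) = i) ∨ (c v = i ∧ c (p v) = j)).card

open Fin.NatCast in
/-- The generalized homomorphism density
`t(T′, {M_{2k,n}}) = ∫_{[0,1]^{b+1}} ∏_{(i,j) : E(i,j) ≠ ∅} g_{2|E(i,j)|}(x_i, x_j) dx`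
of the colored rooted tree `(p, c)` with `k+1` vertices and `b+1` colors. -/
noncomputable def homDensity (g : ℕ → ℝ → ℝ → ℝ) (k b : ℕ) (p c : ℕ → ℕ) : ℝ :=
  ∫ xv : Fin (b + 1) → ℝ in Set.univ.pi fun _ => Set.Icc (0 : ℝ) 1,
    ∏ i ∈ Finset.range (b + 1), ∏ j ∈ Finset.range (b + 1),
      if i < j ∧ 0 < edgeColorCount k p c i j then
        g (2 * edgeColorCount k p c i j) (xv ((i : ℕ) : Fin (b + 1))) (xv ((j : ℕ) : Fin (b + 1)))
      else 1

/-- `(1/n) ∑_{i,j} x_{ij,n}² 1_{{|x_{ij,n}| > t_n}}`, the contribution of the truncated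
tails. -/
noncomputable def truncTail {Ω : Type*} (x : ℕ → ℕ → ℕ → Ω → ℝ) (t : ℕ → ℝ≥0∞)
    (n : ℕ) (ω : Ω) : ℝ :=
  (1 / n : ℝ) * ∑ i ∈ Finset.Icc 1 n, ∑ j ∈ Finset.Icc 1 n,
    if t n < ENNReal.ofReal |x n i j ω| then x n i j ω ^ 2 else 0

/-- `{0, C_2, 0, C_4, 0, …}` is the cumulant sequence of a probability distribution `G`
whose moment sequence satisfies Carleman's condition (via the moment–cumulant formula
`β_m = ∑_{σ ∈ P(m)} κ_σ`). -/
def IsCumulantSeqWithCarleman (C : ℕ → ℝ) : Prop :=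
  ∃ (G : Measure ℝ) (β : ℕ → ℝ), IsProbabilityMeasure G ∧
    (∀ m : ℕ, 1 ≤ m → Integrable (fun s : ℝ => s ^ m) G ∧ ∫ s, s ^ m ∂G = β m) ∧
    (∀ m : ℕ, 1 ≤ m →
      β m = ∑ P ∈ partitionFinset m, ∏ B ∈ P, (if Even B.card then C B.card else 0)) ∧
    CarlemanCond β

end


private lemma pair_eq_cases' {α : Type*} [DecidableEq α] {a b c d : α}
    (h : ({a, b} : Finset α) = {c, d}) : (a = c ∧ b = d) ∨ (a = d ∧ b = c) := by
  have ha : a = c ∨ a = d := by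
    have : a ∈ ({c, d} : Finset α) := by rw [← h]; simp
    simpa using this
  have hb : b = c ∨ b = d := by
    have : b ∈ ({c, d} : Finset α) := by rw [← h]; simp
    simpa using this
  have hc : c = a ∨ c = b := by
    have : c ∈ ({a, b} : Finset α) := by rw [h]; simp
    simpa using this
  have hd : d = a ∨ d = b := by
    have : d ∈ ({a, b} : Finset α) := by rw [h]; simp
    simpa using this
  rcases ha with rfl | rfl
  · rcases hb with rfl | rfl
    · rcases hd with rfl | rfl
      · exact Or.inl ⟨rfl, rfl⟩
      · exact Or.inl ⟨rfl, rfl⟩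
    · exact Or.inl ⟨rfl, rfl⟩
  · rcases hb with rfl | rfl
    · exact Or.inr ⟨rfl, rfl⟩
    · rcases hc with rfl | rfl
      · exact Or.inl ⟨rfl, rfl⟩
      · exact Or.inl ⟨rfl, rfl⟩

/-- `clO T V l` : the introduction time of the value `V l`. -/
private noncomputable def clO {α : Type*} (T : Finset ℕ) (V : ℕ → α) (l : ℕ) : ℕ :=
  sInf {s : ℕ | s ∈ T ∧ V s = V l}

/-- parent function on introduction times -/
private noncomputable def pO {α : Type*} (T : Finset ℕ) (V : ℕ → α) (t : ℕ) : ℕ :=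
  if t = 0 then 0 else clO T V (t - 1)

private lemma clO_congr {α : Type*} {T : Finset ℕ} {V : ℕ → α} {l l' : ℕ}
    (h : V l = V l') : clO T V l = clO T V l' := by
  unfold clO; rw [h]

private noncomputable def depthOf (p : ℕ → ℕ) : ℕ → ℕ
  | 0 => 0
  | (t+1) => depthOf p (min (p (t+1)) t) + 1
decreasing_by exact Nat.lt_succ_of_le (Nat.min_le_right _ _)

private lemma depthOf_zero (p : ℕ → ℕ) : depthOf p 0 = 0 := by unfold depthOf; rfl

private lemma depthOf_eq (p : ℕ → ℕ) {t : ℕ} (ht : t ≠ 0) (h : p t < t) :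
    depthOf p t = depthOf p (p t) + 1 := by
  cases t with
  | zero => exact absurd rfl ht
  | succ t' =>
      have hmin : min (p (t' + 1)) t' = p (t' + 1) := Nat.min_eq_left (by omega)
      rw [depthOf, hmin]

private lemma partOf_eq_of_mem {m : ℕ} {P : Finset (Finset ℕ)} (hP : IsPartitionOf m P)
    {B : Finset ℕ} (hB : B ∈ P) {i : ℕ} (hi : i ∈ B) : partOf P i = B := by
  have hfil : P.filter (fun C => i ∈ C) = {B} := by
    ext C
    simp only [Finset.mem_filter, Finset.mem_singleton]
    constructor
    · rintro ⟨hC, hiC⟩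
      by_contra hne
      exact Finset.disjoint_left.mp (hP.2.2.1 C hC B hB hne) hiC hi
    · rintro rfl; exact ⟨hB, hi⟩
  rw [partOf, hfil, Finset.sup_singleton, id]

private lemma partOf_spec {m : ℕ} {P : Finset (Finset ℕ)} (hP : IsPartitionOf m P)
    {i : ℕ} (hi : i ∈ Finset.Icc 1 m) : partOf P i ∈ P ∧ i ∈ partOf P i := by
  obtain ⟨B, hB, hiB⟩ := hP.2.2.2 i hi
  rw [partOf_eq_of_mem hP hB hiB]; exact ⟨hB, hiB⟩



private lemma telescope_Ico (f : ℕ → ℤ) (a b : ℕ) (hab : a ≤ b) :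
    ∑ l ∈ Finset.Ico (a + 1) (b + 1), (f l - f (l - 1)) = f b - f a := by
  induction b with
  | zero =>
    have : a = 0 := by omega
    subst this; simp
  | succ b IH =>
    rcases eq_or_lt_of_le hab with rfl | h
    · simp
    · have hab' : a ≤ b := by omega
      rw [Finset.sum_Ico_succ_top (by omega), IH hab']
      simp only [Nat.add_sub_cancel]
      ring

private lemma struct_main (m : ℕ) (P : Finset (Finset ℕ)) (b : ℕ)
    (hP : IsPartitionOf m P) (hb : P.card = b)
    (n : ℕ) (v : Fin (m + 1) → Fin n)
    (hv : v ∈ circuitsOf m P n)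
    (himg : (Finset.univ.image v).card = b + 1) :
    (∀ i ∈ Finset.Icc 1 m, ∀ j ∈ Finset.Icc 1 m, i < j → partOf P i = partOf P j →
      (∀ l ∈ Finset.Icc 1 m, i < l → l < j → partOf P l ≠ partOf P i) →
      extFin v (i - 1) = extFin v j ∧ extFin v i = extFin v (j - 1)) ∧
    (∀ B ∈ P, ∀ i ∈ B, ∀ j ∈ B, i < j → (∀ l ∈ B, ¬(i < l ∧ l < j)) →
      ∀ B' ∈ P, B' ≠ B →
        (B'.filter fun l => i < l ∧ l < j ∧ Odd l).card
          = (B'.filter fun l => i < l ∧ l < j ∧ Even l).card) ∧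
    (∀ B ∈ P, (∀ B' ∈ P, B' ≠ B → ∃ a ∈ B', ∀ c ∈ B, a < c) → IsEvenIntervalUnion B) := by
  classical
  simp only [circuitsOf, Finset.mem_filter, Finset.mem_univ, true_and] at hv
  set V : ℕ → Fin n := extFin v with hVdef
  obtain ⟨hVm0, hiff⟩ := hv
  -- the set of introduction times
  set MM : Finset ℕ := P.image (fun B => sInf {s : ℕ | s ∈ B}) with hMMdef
  set T : Finset ℕ := insert 0 MM with hTdef
  set w : ℕ → ℕ := fun l => sInf {s : ℕ | s ∈ partOf P l} with hwdef
  set cl : ℕ → ℕ := clO T V with hcldef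
  set p : ℕ → ℕ := pO T V with hpdef
  set d : ℕ → ℕ := depthOf p with hddef
  have hT0 : (0 : ℕ) ∈ T := Finset.mem_insert_self 0 MM
  -- basic facts on w
  have hw_mem : ∀ {i : ℕ}, i ∈ Finset.Icc 1 m →
      w i ∈ partOf P i ∧ w i ≤ i ∧ w i ∈ MM ∧ w i ∈ Finset.Icc 1 m ∧
      partOf P (w i) = partOf P i := by
    intro i hi
    obtain ⟨hPi, hiPi⟩ := partOf_spec hP hi
    have hne : {s : ℕ | s ∈ partOf P i}.Nonempty := ⟨i, hiPi⟩
    have hmem : w i ∈ partOf P i := Nat.sInf_mem hne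
    have hle : w i ≤ i := Nat.sInf_le hiPi
    have hMM : w i ∈ MM := by
      rw [hMMdef]; exact Finset.mem_image_of_mem _ hPi
    have hIcc : w i ∈ Finset.Icc 1 m := hP.2.1 _ hPi hmem
    exact ⟨hmem, hle, hMM, hIcc, partOf_eq_of_mem hP hPi hmem⟩
  have hMM_lift : ∀ t ∈ MM, t ∈ Finset.Icc 1 m ∧ w t = t := by
    intro t ht
    rw [hMMdef] at ht
    obtain ⟨B, hB, rfl⟩ := Finset.mem_image.mp ht
    have hBne : {s : ℕ | s ∈ B}.Nonempty := by
      obtain ⟨x, hx⟩ := hP.1 B hB; exact ⟨x, hx⟩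
    have htB : sInf {s : ℕ | s ∈ B} ∈ B := Nat.sInf_mem hBne
    have hIcc : sInf {s : ℕ | s ∈ B} ∈ Finset.Icc 1 m := hP.2.1 _ hB htB
    refine ⟨hIcc, ?_⟩
    rw [hwdef]
    simp only
    rw [partOf_eq_of_mem hP hB htB]
  have hMM_pos : ∀ t ∈ MM, 1 ≤ t ∧ t ≤ m := by
    intro t ht
    have := (hMM_lift t ht).1
    simpa [Finset.mem_Icc] using this
  have hT_le : ∀ t ∈ T, t ≤ m := by
    intro t ht
    rw [hTdef] at ht
    rcases Finset.mem_insert.mp ht with rfl | h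
    · exact Nat.zero_le m
    · exact (hMM_pos t h).2
  have hinj_min : ∀ B ∈ P, ∀ B' ∈ P, sInf {s : ℕ | s ∈ B} = sInf {s : ℕ | s ∈ B'} → B = B' := by
    intro B hB B' hB' he
    by_contra hne
    have hBne : {s : ℕ | s ∈ B}.Nonempty := by obtain ⟨x, hx⟩ := hP.1 B hB; exact ⟨x, hx⟩
    have h1 : sInf {s : ℕ | s ∈ B} ∈ B := Nat.sInf_mem hBne
    have h2 : sInf {s : ℕ | s ∈ B} ∈ B' := by
      rw [he]
      have hB'ne : {s : ℕ | s ∈ B'}.Nonempty := by obtain ⟨x, hx⟩ := hP.1 B' hB'; exact ⟨x, hx⟩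
      exact Nat.sInf_mem hB'ne
    exact Finset.disjoint_left.mp (hP.2.2.1 B hB B' hB' hne) h1 h2
  have hww : ∀ {i j : ℕ}, i ∈ Finset.Icc 1 m → j ∈ Finset.Icc 1 m →
      (partOf P i = partOf P j ↔ w i = w j) := by
    intro i j hi hj
    constructor
    · intro h; rw [hwdef]; simp only; rw [h]
    · intro h
      have h1 := (partOf_spec hP hi).1
      have h2 := (partOf_spec hP hj).1
      exact hinj_min _ h1 _ h2 h
  have hedge : ∀ {i j : ℕ}, i ∈ Finset.Icc 1 m → j ∈ Finset.Icc 1 m →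
      partOf P i = partOf P j →
      ({V (i - 1), V i} : Finset (Fin n)) = {V (j - 1), V j} :=
    fun {i j} hi hj h => (hiff i hi j hj).mp h
  -- B1 : every value is introduced at a time in T
  have B1 : ∀ l, l ≤ m → ∃ t, t ∈ T ∧ t ≤ l ∧ V t = V l := by
    intro l
    induction l using Nat.strong_induction_on with
    | _ l IH =>
      intro hlm
      rcases Nat.eq_zero_or_pos l with rfl | hl1
      · exact ⟨0, hT0, le_refl _, rfl⟩
      · have hlI : l ∈ Finset.Icc 1 m := Finset.mem_Icc.mpr ⟨hl1, hlm⟩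
        obtain ⟨hwm, hwle, hwMM, hwIcc, hwpart⟩ := hw_mem hlI
        have hwT : w l ∈ T := by rw [hTdef]; exact Finset.mem_insert_of_mem hwMM
        rcases eq_or_lt_of_le hwle with heq | hlt
        · exact ⟨w l, hwT, hwle, by rw [heq]⟩
        · have hVl : V l ∈ ({V (w l - 1), V (w l)} : Finset (Fin n)) := by
            rw [← hedge hlI hwIcc hwpart.symm]
            simp
          simp only [Finset.mem_insert, Finset.mem_singleton] at hVl
          rcases hVl with h | h
          · have hw1 : 1 ≤ w l := (hMM_pos _ hwMM).1
            obtain ⟨t, htT, htle, htV⟩ := IH (w l - 1) (by omega) (by omega)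
            exact ⟨t, htT, by omega, by rw [htV, ← h]⟩
          · exact ⟨w l, hwT, hwle, h.symm⟩
  -- cardinality of T and injectivity of V on T
  have hTcard : T.card = b + 1 := by
    have hMMcard : MM.card = b := by
      rw [hMMdef, ← hb]
      apply Finset.card_image_of_injOn
      intro B hB B' hB' h
      exact hinj_min B hB B' hB' h
    rw [hTdef, Finset.card_insert_of_notMem, hMMcard]
    intro h0
    exact absurd (hMM_pos 0 h0).1 (by omega)
  have himage : Finset.univ.image v = T.image V := by
    apply Finset.Subset.antisymm
    · intro x hx
      obtain ⟨a, _, rfl⟩ := Finset.mem_image.mp hx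
      obtain ⟨t, htT, _, htV⟩ := B1 a.val (by omega)
      have : V a.val = v a := by
        rw [hVdef]
        show v _ = v a
        congr 1
        exact Fin.ext (Nat.mod_eq_of_lt a.isLt)
      rw [← this, ← htV]
      exact Finset.mem_image_of_mem _ htT
    · intro x hx
      obtain ⟨t, _, rfl⟩ := Finset.mem_image.mp hx
      have : V t = v ⟨t % (m + 1), Nat.mod_lt t (Nat.succ_pos m)⟩ := rfl
      rw [this]
      exact Finset.mem_image_of_mem _ (Finset.mem_univ _)
  have hinjV : ∀ s ∈ T, ∀ t ∈ T, V s = V t → s = t := by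
    have hcard : (T.image V).card = T.card := by
      rw [← himage, himg, hTcard]
    intro s hs t ht hst
    exact Finset.injOn_of_card_image_eq hcard hs ht hst
  -- cl facts
  have hcl : ∀ l, cl l ∈ T ∧ V (cl l) = V l := by
    intro l
    have hmod : V l = V (l % (m + 1)) := by
      rw [hVdef]
      show v _ = v _
      congr 1
      exact Fin.ext (Nat.mod_mod_of_dvd l (dvd_refl (m + 1))).symm
    have hne : {s : ℕ | s ∈ T ∧ V s = V l}.Nonempty := by
      obtain ⟨t, htT, _, htV⟩ := B1 (l % (m + 1)) (by
        have := Nat.mod_lt l (show 0 < m + 1 by omega); omega)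
      exact ⟨t, htT, by rw [htV, ← hmod]⟩
    have := Nat.sInf_mem hne
    exact ⟨this.1, this.2⟩
  have hcl_le : ∀ l, l ≤ m → cl l ≤ l := by
    intro l hl
    obtain ⟨t, htT, htle, htV⟩ := B1 l hl
    exact le_trans (Nat.sInf_le ⟨htT, htV⟩) htle
  have hclT : ∀ t ∈ T, cl t = t := by
    intro t ht
    exact hinjV _ (hcl t).1 _ ht (hcl t).2
  -- parent facts
  have hp0 : p 0 = 0 := by rw [hpdef]; simp [pO]
  have hpcl : ∀ t, t ≠ 0 → p t = cl (t - 1) := by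
    intro t ht; rw [hpdef, hcldef]; simp [pO, ht]
  have hple : ∀ x, p x ≤ x - 1 := by
    intro x
    rcases Nat.eq_zero_or_pos x with rfl | hx
    · simp [hp0]
    · rw [hpcl x (by omega)]
      rcases le_or_gt (x - 1) m with h | h
      · exact hcl_le _ h
      · calc cl (x - 1) ≤ m := hT_le _ (hcl (x - 1)).1
          _ ≤ x - 1 := by omega
  have hplt : ∀ x, x ≠ 0 → p x < x := by
    intro x hx
    have := hple x; omega
  have hpT : ∀ t, p t ∈ T := by
    intro t
    rcases Nat.eq_zero_or_pos t with rfl | ht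
    · rw [hp0]; exact hT0
    · rw [hpcl t (by omega)]; exact (hcl (t - 1)).1
  have hiterle : ∀ s x, p^[s] x ≤ x := by
    intro s
    induction s with
    | zero => intro x; simp
    | succ s IH =>
      intro x
      rw [Function.iterate_succ_apply]
      calc p^[s] (p x) ≤ p x := IH (p x)
        _ ≤ x := by have := hple x; omega
  have hD2 : ∀ t0, t0 ≠ 0 → ¬ (∃ s, p^[s] (p t0) = t0) := by
    rintro t0 ht0 ⟨s, hs⟩
    have h1 := hiterle s (p t0)
    have h2 := hplt t0 ht0
    omega
  have hD3 : ∀ t0 u, u ≠ t0 → ((∃ s, p^[s] u = t0) ↔ (∃ s, p^[s] (p u) = t0)) := by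
    intro t0 u hu
    constructor
    · rintro ⟨s, hs⟩
      cases s with
      | zero => exact absurd hs hu
      | succ s' => exact ⟨s', by rwa [Function.iterate_succ_apply] at hs⟩
    · rintro ⟨s, hs⟩
      exact ⟨s + 1, by rwa [Function.iterate_succ_apply]⟩
  -- depth recursion on MM
  have hdp : ∀ t ∈ MM, d t = d (p t) + 1 := by
    intro t ht
    have h1 : t ≠ 0 := by have := (hMM_pos t ht).1; omega
    rw [hddef]
    exact depthOf_eq p h1 (hplt t h1)
  have hpne : ∀ t ∈ MM, p t ≠ t := by
    intro t ht
    have h1 : t ≠ 0 := by have := (hMM_pos t ht).1; omega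
    have := hplt t h1; omega
  have hVpne : ∀ t ∈ MM, V (p t) ≠ V t := by
    intro t ht hVeq
    have hTt : t ∈ T := by rw [hTdef]; exact Finset.mem_insert_of_mem ht
    exact hpne t ht (hinjV _ (hpT t) _ hTt hVeq)
  -- the STEP lemma
  have STEP : ∀ l ∈ Finset.Icc 1 m,
      (cl (l - 1) = p (w l) ∧ cl l = w l) ∨ (cl (l - 1) = w l ∧ cl l = p (w l)) := by
    intro l hl
    obtain ⟨hwm, hwle, hwMM, hwIcc, hwpart⟩ := hw_mem hl
    have hwT : w l ∈ T := by rw [hTdef]; exact Finset.mem_insert_of_mem hwMM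
    have hw1 : 1 ≤ w l := (hMM_pos _ hwMM).1
    have hVp : V (w l - 1) = V (p (w l)) := by
      rw [hpcl (w l) (by omega)]
      exact (hcl (w l - 1)).2.symm
    have he : ({V (l - 1), V l} : Finset (Fin n)) = {V (p (w l)), V (w l)} := by
      rw [← hVp]
      exact hedge hl hwIcc hwpart.symm
    rcases pair_eq_cases' he with ⟨h1, h2⟩ | ⟨h1, h2⟩
    · left
      constructor
      · exact hinjV _ (hcl (l - 1)).1 _ (hpT (w l)) (by rw [(hcl (l - 1)).2, h1])
      · exact hinjV _ (hcl l).1 _ hwT (by rw [(hcl l).2, h2])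
    · right
      constructor
      · exact hinjV _ (hcl (l - 1)).1 _ hwT (by rw [(hcl (l - 1)).2, h1])
      · exact hinjV _ (hcl l).1 _ (hpT (w l)) (by rw [(hcl l).2, h2])
  have hcl0 : cl 0 = 0 := hclT 0 hT0
  -- parity of depth along the walk
  have PAR : ∀ l, l ≤ m → (d (cl l) + l) % 2 = 0 := by
    intro l
    induction l with
    | zero => intro _; rw [hcl0, hddef, depthOf_zero]
    | succ l IH =>
      intro hlm
      have hIH := IH (by omega)
      have hlI : l + 1 ∈ Finset.Icc 1 m := Finset.mem_Icc.mpr ⟨by omega, hlm⟩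
      obtain ⟨_, _, hwMM, _, _⟩ := hw_mem hlI
      have hd1 := hdp _ hwMM
      rcases STEP (l + 1) hlI with ⟨h1, h2⟩ | ⟨h1, h2⟩ <;>
        simp only [Nat.add_sub_cancel] at h1
      · have hstep : d (cl (l + 1)) = d (cl l) + 1 := by rw [h2, h1]; exact hd1
        omega
      · have hstep : d (cl l) = d (cl (l + 1)) + 1 := by rw [h1, h2]; exact hd1
        omega
  -- bullet (ii) : the (C2) cross-matching constraint
  have main2 : ∀ i ∈ Finset.Icc 1 m, ∀ j ∈ Finset.Icc 1 m, i < j → partOf P i = partOf P j →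
      (∀ l ∈ Finset.Icc 1 m, i < l → l < j → partOf P l ≠ partOf P i) →
      V (i - 1) = V j ∧ V i = V (j - 1) := by
    intro i hi j hj hij hpart hbet
    obtain ⟨hi1, him⟩ := Finset.mem_Icc.mp hi
    obtain ⟨hj1, hjm⟩ := Finset.mem_Icc.mp hj
    obtain ⟨_, _, hwMMi, _, _⟩ := hw_mem hi
    set t0 := w i with ht0def
    have hwj : w j = t0 := ((hww hi hj).mp hpart).symm
    have ht0ne : t0 ≠ 0 := by have := (hMM_pos _ hwMMi).1; omega
    -- the indicator of the descendants of t0 is constant on [i, j-1]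
    have hconst : ∀ l, i ≤ l → l ≤ j - 1 →
        ((∃ s, p^[s] (cl l) = t0) ↔ (∃ s, p^[s] (cl i) = t0)) := by
      intro l hl
      induction l, hl using Nat.le_induction with
      | base => intro _; rfl
      | succ l hl IH =>
        intro hlj
        have hlmem : l + 1 ∈ Finset.Icc 1 m := Finset.mem_Icc.mpr ⟨by omega, by omega⟩
        have hne' : w (l + 1) ≠ t0 := by
          intro hcontra
          exact hbet (l + 1) hlmem (by omega) (by omega)
            ((hww hlmem hi).mpr hcontra)
        have hiter : (∃ s, p^[s] (cl (l + 1)) = t0) ↔ (∃ s, p^[s] (cl l) = t0) := by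
          rcases STEP (l + 1) hlmem with ⟨h1, h2⟩ | ⟨h1, h2⟩ <;>
            simp only [Nat.add_sub_cancel] at h1
          · rw [h1, h2]; exact hD3 t0 (w (l + 1)) hne'
          · rw [h1, h2]; exact (hD3 t0 (w (l + 1)) hne').symm
        rw [hiter]
        exact IH (by omega)
    have hDt : (∃ s, p^[s] t0 = t0) := ⟨0, rfl⟩
    have hDp : ¬ (∃ s, p^[s] (p t0) = t0) := hD2 t0 ht0ne
    have hcj : cl (j - 1) = cl i := by
      have hiffc := hconst (j - 1) (by omega) (le_refl _)
      rcases STEP i hi with ⟨hi1', hi2'⟩ | ⟨hi1', hi2'⟩ <;>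
        rcases STEP j hj with ⟨hj1', hj2'⟩ | ⟨hj1', hj2'⟩ <;>
        rw [hwj] at hj1' hj2' <;> rw [← ht0def] at hi1' hi2'
      · rw [hj1', hi2'] at hiffc
        exact absurd (hiffc.mpr ⟨0, rfl⟩) hDp
      · rw [hj1', hi2']
      · rw [hj1', hi2']
      · rw [hj1', hi2'] at hiffc
        exact absurd (hiffc.mp ⟨0, rfl⟩) hDp
    have hVji : V (j - 1) = V i := by
      have h1 := (hcl (j - 1)).2
      have h2 := (hcl i).2
      rw [← h1, hcj, h2]
    have hclne : cl (i - 1) ≠ cl i := by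
      have hne := hpne _ hwMMi
      rcases STEP i hi with ⟨hi1', hi2'⟩ | ⟨hi1', hi2'⟩ <;> rw [← ht0def] at hi1' hi2' <;>
        rw [hi1', hi2']
      · exact hne
      · exact fun h => hne h.symm
    have hVne : V (i - 1) ≠ V i := by
      intro hc
      exact hclne (hinjV _ (hcl (i - 1)).1 _ (hcl i).1
        (by rw [(hcl (i - 1)).2, (hcl i).2]; exact hc))
    have hedgeij := hedge hi hj hpart
    rcases pair_eq_cases' hedgeij with ⟨h1, h2⟩ | ⟨h1, h2⟩
    · exact absurd (h1.trans hVji) hVne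
    · exact ⟨h1, h2⟩
  -- bullet (iii) : odd/even balance
  have main3 : ∀ B ∈ P, ∀ i ∈ B, ∀ j ∈ B, i < j → (∀ l ∈ B, ¬(i < l ∧ l < j)) →
      ∀ B' ∈ P, B' ≠ B →
        (B'.filter fun l => i < l ∧ l < j ∧ Odd l).card
          = (B'.filter fun l => i < l ∧ l < j ∧ Even l).card := by
    intro B hB i hiB j hjB hij hgap B' hB' hBne
    have hi : i ∈ Finset.Icc 1 m := hP.2.1 B hB hiB
    have hj : j ∈ Finset.Icc 1 m := hP.2.1 B hB hjB
    have hi1 : 1 ≤ i := (Finset.mem_Icc.mp hi).1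
    have hjm : j ≤ m := (Finset.mem_Icc.mp hj).2
    have hpartiB : partOf P i = B := partOf_eq_of_mem hP hB hiB
    have hpartjB : partOf P j = B := partOf_eq_of_mem hP hB hjB
    set t' := sInf {s : ℕ | s ∈ B'} with ht'def
    have ht'MM : t' ∈ MM := by rw [hMMdef, ht'def]; exact Finset.mem_image_of_mem _ hB'
    have ht'pos : t' ≠ 0 := by have := (hMM_pos _ ht'MM).1; omega
    have hB'iff : ∀ l ∈ Finset.Icc 1 m, (l ∈ B' ↔ w l = t') := by
      intro l hl
      have hwl : w l = sInf {s : ℕ | s ∈ partOf P l} := by rw [hwdef]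
      constructor
      · intro h
        rw [hwl, partOf_eq_of_mem hP hB' h, ht'def]
      · intro h
        have hPl := (partOf_spec hP hl).1
        have heq : partOf P l = B' := by
          apply hinj_min _ hPl _ hB'
          rw [← hwl, h, ht'def]
        rw [← heq]; exact (partOf_spec hP hl).2
    have hbet : ∀ l ∈ Finset.Icc 1 m, i < l → l < j → partOf P l ≠ partOf P i := by
      intro l hl h1 h2 hc
      have : l ∈ B := by rw [← hpartiB, ← hc]; exact (partOf_spec hP hl).2
      exact hgap l this ⟨h1, h2⟩
    obtain ⟨_, hVij⟩ := main2 i hi j hj hij (by rw [hpartiB, hpartjB]) hbet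
    have hcleq : cl (j - 1) = cl i := by rw [hcldef]; exact (clO_congr hVij).symm
    set f : ℕ → ℤ := fun l => if ∃ s, p^[s] (cl l) = t' then 1 else 0 with hfdef
    have htel := telescope_Ico f i (j - 1) (by omega)
    have hIcoeq : Finset.Ico (i + 1) (j - 1 + 1) = Finset.Ico (i + 1) j := by
      congr 1; omega
    rw [hIcoeq] at htel
    have hptne : p t' ≠ t' := hpne _ ht'MM
    have hpt : ∀ l ∈ Finset.Ico (i + 1) j,
        f l - f (l - 1) = (if l ∈ B' ∧ cl l = t' then (1 : ℤ) else 0)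
          - (if l ∈ B' ∧ cl l = p t' then (1 : ℤ) else 0) := by
      intro l hl
      obtain ⟨hl1, hl2⟩ := Finset.mem_Ico.mp hl
      have hlm : l ∈ Finset.Icc 1 m := Finset.mem_Icc.mpr ⟨by omega, by omega⟩
      by_cases hc : l ∈ B'
      · have hwlt' : w l = t' := (hB'iff l hlm).mp hc
        rcases STEP l hlm with ⟨h1, h2⟩ | ⟨h1, h2⟩ <;> rw [hwlt'] at h1 h2
        · have hfl : f l = 1 := by rw [hfdef]; simp only; rw [h2]; exact if_pos ⟨0, rfl⟩
          have hfl1 : f (l - 1) = 0 := by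
            rw [hfdef]; simp only; rw [h1]; exact if_neg (hD2 t' ht'pos)
          have hr1 : (if l ∈ B' ∧ cl l = t' then (1 : ℤ) else 0) = 1 := if_pos ⟨hc, h2⟩
          have hr2 : (if l ∈ B' ∧ cl l = p t' then (1 : ℤ) else 0) = 0 := by
            apply if_neg; rintro ⟨_, hcl'⟩; rw [h2] at hcl'; exact hptne hcl'.symm
          rw [hfl, hfl1, hr1, hr2]
        · have hfl : f l = 0 := by
            rw [hfdef]; simp only; rw [h2]; exact if_neg (hD2 t' ht'pos)
          have hfl1 : f (l - 1) = 1 := by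
            rw [hfdef]; simp only; rw [h1]; exact if_pos ⟨0, rfl⟩
          have hr1 : (if l ∈ B' ∧ cl l = t' then (1 : ℤ) else 0) = 0 := by
            apply if_neg; rintro ⟨_, hcl'⟩; rw [h2] at hcl'; exact hptne hcl'
          have hr2 : (if l ∈ B' ∧ cl l = p t' then (1 : ℤ) else 0) = 1 := if_pos ⟨hc, h2⟩
          rw [hfl, hfl1, hr1, hr2]
      · have hwlt' : w l ≠ t' := fun h => hc ((hB'iff l hlm).mpr h)
        have hiter : (∃ s, p^[s] (cl l) = t') ↔ (∃ s, p^[s] (cl (l - 1)) = t') := by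
          rcases STEP l hlm with ⟨h1, h2⟩ | ⟨h1, h2⟩
          · rw [h1, h2]; exact hD3 t' (w l) hwlt'
          · rw [h1, h2]; exact (hD3 t' (w l) hwlt').symm
        have hfeq : f l = f (l - 1) := by
          rw [hfdef]; simp only; exact if_congr hiter rfl rfl
        rw [hfeq, if_neg (fun hx => hc hx.1), if_neg (fun hx => hc hx.1)]
        ring
    have hsum : ((Finset.Ico (i + 1) j).filter (fun l => l ∈ B' ∧ cl l = t')).card
        = ((Finset.Ico (i + 1) j).filter (fun l => l ∈ B' ∧ cl l = p t')).card := by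
      have hfeq : f (j - 1) = f i := by rw [hfdef]; simp only; rw [hcleq]
      have h1 : ∑ l ∈ Finset.Ico (i + 1) j, (f l - f (l - 1)) = 0 := by
        rw [htel, hfeq, sub_self]
      rw [Finset.sum_congr rfl hpt, Finset.sum_sub_distrib,
        Finset.sum_boole, Finset.sum_boole] at h1
      exact_mod_cast sub_eq_zero.mp h1
    have hchar : ∀ l, l ∈ B' → i < l → l < j →
        ((cl l = t' ∨ cl l = p t') ∧ (d (cl l) + l) % 2 = 0) := by
      intro l hlB hil hlj
      have hlm : l ∈ Finset.Icc 1 m := hP.2.1 B' hB' hlB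
      have hwlt' : w l = t' := (hB'iff l hlm).mp hlB
      have hpar := PAR l (Finset.mem_Icc.mp hlm).2
      rcases STEP l hlm with ⟨h1, h2⟩ | ⟨h1, h2⟩ <;> rw [hwlt'] at h2
      · exact ⟨Or.inl h2, hpar⟩
      · exact ⟨Or.inr h2, hpar⟩
    have hdparity : d t' = d (p t') + 1 := hdp _ ht'MM
    by_cases hpar : d t' % 2 = 1
    · have hO : B'.filter (fun l => i < l ∧ l < j ∧ Odd l)
          = (Finset.Ico (i + 1) j).filter (fun l => l ∈ B' ∧ cl l = t') := by
        ext l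
        simp only [Finset.mem_filter, Finset.mem_Ico, Nat.odd_iff]
        constructor
        · rintro ⟨hlB, h1, h2, h3⟩
          obtain ⟨hcl', hp'⟩ := hchar l hlB h1 h2
          refine ⟨⟨by omega, h2⟩, hlB, ?_⟩
          rcases hcl' with h | h
          · exact h
          · exfalso; rw [h] at hp'; omega
        · rintro ⟨⟨h1, h2⟩, hlB, hcl'⟩
          obtain ⟨_, hp'⟩ := hchar l hlB (by omega) h2
          rw [hcl'] at hp'
          exact ⟨hlB, by omega, h2, by omega⟩
      have hE : B'.filter (fun l => i < l ∧ l < j ∧ Even l)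
          = (Finset.Ico (i + 1) j).filter (fun l => l ∈ B' ∧ cl l = p t') := by
        ext l
        simp only [Finset.mem_filter, Finset.mem_Ico, Nat.even_iff]
        constructor
        · rintro ⟨hlB, h1, h2, h3⟩
          obtain ⟨hcl', hp'⟩ := hchar l hlB h1 h2
          refine ⟨⟨by omega, h2⟩, hlB, ?_⟩
          rcases hcl' with h | h
          · exfalso; rw [h] at hp'; omega
          · exact h
        · rintro ⟨⟨h1, h2⟩, hlB, hcl'⟩
          obtain ⟨_, hp'⟩ := hchar l hlB (by omega) h2
          rw [hcl'] at hp'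
          exact ⟨hlB, by omega, h2, by omega⟩
      rw [hO, hE]; exact hsum
    · have hO : B'.filter (fun l => i < l ∧ l < j ∧ Odd l)
          = (Finset.Ico (i + 1) j).filter (fun l => l ∈ B' ∧ cl l = p t') := by
        ext l
        simp only [Finset.mem_filter, Finset.mem_Ico, Nat.odd_iff]
        constructor
        · rintro ⟨hlB, h1, h2, h3⟩
          obtain ⟨hcl', hp'⟩ := hchar l hlB h1 h2
          refine ⟨⟨by omega, h2⟩, hlB, ?_⟩
          rcases hcl' with h | h
          · exfalso; rw [h] at hp'; omega
          · exact h
        · rintro ⟨⟨h1, h2⟩, hlB, hcl'⟩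
          obtain ⟨_, hp'⟩ := hchar l hlB (by omega) h2
          rw [hcl'] at hp'
          exact ⟨hlB, by omega, h2, by omega⟩
      have hE : B'.filter (fun l => i < l ∧ l < j ∧ Even l)
          = (Finset.Ico (i + 1) j).filter (fun l => l ∈ B' ∧ cl l = t') := by
        ext l
        simp only [Finset.mem_filter, Finset.mem_Ico, Nat.even_iff]
        constructor
        · rintro ⟨hlB, h1, h2, h3⟩
          obtain ⟨hcl', hp'⟩ := hchar l hlB h1 h2
          refine ⟨⟨by omega, h2⟩, hlB, ?_⟩
          rcases hcl' with h | h
          · exact h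
          · exfalso; rw [h] at hp'; omega
        · rintro ⟨⟨h1, h2⟩, hlB, hcl'⟩
          obtain ⟨_, hp'⟩ := hchar l hlB (by omega) h2
          rw [hcl'] at hp'
          exact ⟨hlB, by omega, h2, by omega⟩
      rw [hO, hE]; exact hsum.symm
  -- bullet (i) : the last letter appears in even runs
  have main1 : ∀ B ∈ P, (∀ B' ∈ P, B' ≠ B → ∃ a ∈ B', ∀ c ∈ B, a < c) →
      IsEvenIntervalUnion B := by
    intro B hB hlast
    set tz := sInf {s : ℕ | s ∈ B} with htzdef
    have hBne : B.Nonempty := hP.1 B hB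
    have hsetne : {s : ℕ | s ∈ B}.Nonempty := by obtain ⟨x, hx⟩ := hBne; exact ⟨x, hx⟩
    have htzB : tz ∈ B := Nat.sInf_mem hsetne
    have htzMM : tz ∈ MM := by rw [hMMdef, htzdef]; exact Finset.mem_image_of_mem _ hB
    have htz1 : 1 ≤ tz := (hMM_pos _ htzMM).1
    have hBsub : B ⊆ Finset.Icc 1 m := hP.2.1 B hB
    have hothers : ∀ B' ∈ P, B' ≠ B → sInf {s : ℕ | s ∈ B'} < tz := by
      intro B' hB' hne
      obtain ⟨a, haB', ha⟩ := hlast B' hB' hne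
      have h1 : sInf {s : ℕ | s ∈ B'} ≤ a := Nat.sInf_le haB'
      have h2 : a < tz := ha tz htzB
      omega
    have hBw : ∀ l ∈ B, w l = tz := by
      intro l hl
      have hwl : w l = sInf {s : ℕ | s ∈ partOf P l} := by rw [hwdef]
      rw [hwl, partOf_eq_of_mem hP hB hl, htzdef]
    have hwlt : ∀ l ∈ Finset.Icc 1 m, l ∉ B → w l < tz := by
      intro l hl hnB
      have hPl := (partOf_spec hP hl).1
      have hlP := (partOf_spec hP hl).2
      have hne : partOf P l ≠ B := fun h => hnB (h ▸ hlP)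
      have hwl : w l = sInf {s : ℕ | s ∈ partOf P l} := by rw [hwdef]
      rw [hwl]; exact hothers _ hPl hne
    have hnotz : ∀ l ∈ Finset.Icc 1 m, l ∉ B → cl (l - 1) ≠ tz ∧ cl l ≠ tz := by
      intro l hl hnB
      have hwl := hwlt l hl hnB
      have hp1 : p (w l) < tz := by have := hple (w l); omega
      rcases STEP l hl with ⟨h1, h2⟩ | ⟨h1, h2⟩ <;> rw [h1, h2] <;> exact ⟨by omega, by omega⟩
    have hcl0z : cl 0 ≠ tz := by rw [hcl0]; omega
    have hclmz : cl m ≠ tz := by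
      have : cl m = cl 0 := by rw [hcldef]; exact clO_congr hVm0
      rw [this]; exact hcl0z
    have hptz : p tz ≠ tz := hpne _ htzMM
    have hrun : ∀ a c : ℕ, a ≤ c → Finset.Icc a c ⊆ B → (a - 1) ∉ B → (c + 1) ∉ B →
        Even (Finset.Icc a c).card := by
      intro a c hac hsub ha1 hc1
      have haB : a ∈ B := hsub (Finset.mem_Icc.mpr ⟨le_refl _, hac⟩)
      have haI : a ∈ Finset.Icc 1 m := hBsub haB
      have ha1' : 1 ≤ a := (Finset.mem_Icc.mp haI).1
      have hcB : c ∈ B := hsub (Finset.mem_Icc.mpr ⟨hac, le_refl _⟩)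
      have hcm : c ≤ m := (Finset.mem_Icc.mp (hBsub hcB)).2
      have hstart : cl (a - 1) ≠ tz := by
        rcases Nat.eq_or_lt_of_le ha1' with h | h
        · have h0 : (a - 1 : ℕ) = 0 := by omega
          rw [h0]; exact hcl0z
        · have hmem : a - 1 ∈ Finset.Icc 1 m := Finset.mem_Icc.mpr ⟨by omega, by omega⟩
          exact (hnotz (a - 1) hmem ha1).2
      have hend : cl c ≠ tz := by
        rcases Nat.eq_or_lt_of_le hcm with h | h
        · rw [h]; exact hclmz
        · have hmem : c + 1 ∈ Finset.Icc 1 m := Finset.mem_Icc.mpr ⟨by omega, by omega⟩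
          have h2 := (hnotz (c + 1) hmem hc1).1
          simpa using h2
      have halt : ∀ r, a + r ≤ c + 1 → cl (a - 1 + r) = if Even r then p tz else tz := by
        intro r
        induction r with
        | zero =>
          intro _
          simp only [Nat.add_zero, if_pos Even.zero]
          rcases STEP a haI with ⟨h1, h2⟩ | ⟨h1, h2⟩ <;> rw [hBw a haB] at h1 h2
          · exact h1
          · exact absurd h1 hstart
        | succ r IH =>
          intro hr
          have hIH := IH (by omega)
          have hlB : a + r ∈ B := hsub (Finset.mem_Icc.mpr ⟨by omega, by omega⟩)
          have hlI : a + r ∈ Finset.Icc 1 m := hBsub hlB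
          have hl1 : a + r - 1 = a - 1 + r := by omega
          have hl2 : a - 1 + (r + 1) = a + r := by omega
          by_cases hre : Even r
          · rw [if_pos hre] at hIH
            have hnre : ¬ Even (r + 1) := by rw [Nat.even_add_one]; exact not_not_intro hre
            rw [hl2, if_neg hnre]
            rcases STEP (a + r) hlI with ⟨h1, h2⟩ | ⟨h1, h2⟩ <;>
              rw [hBw (a + r) hlB] at h1 h2 <;> rw [hl1, hIH] at h1
            · exact h2
            · exact absurd h1 hptz
          · rw [if_neg hre] at hIH
            have hnre : Even (r + 1) := by rw [Nat.even_add_one]; exact hre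
            rw [hl2, if_pos hnre]
            rcases STEP (a + r) hlI with ⟨h1, h2⟩ | ⟨h1, h2⟩ <;>
              rw [hBw (a + r) hlB] at h1 h2 <;> rw [hl1, hIH] at h1
            · exact absurd h1.symm hptz
            · exact h2
      have hfin := halt (c - a + 1) (by omega)
      have heq : a - 1 + (c - a + 1) = c := by omega
      rw [heq] at hfin
      by_cases hev : Even (c - a + 1)
      · rw [Nat.card_Icc]
        have h3 : c + 1 - a = c - a + 1 := by omega
        rw [h3]; exact hev
      · rw [if_neg hev] at hfin; exact absurd hfin hend
    set S := (B ×ˢ B).filter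
      (fun q : ℕ × ℕ => q.1 ≤ q.2 ∧ Finset.Icc q.1 q.2 ⊆ B ∧ (q.1 - 1) ∉ B ∧ (q.2 + 1) ∉ B)
      with hSdef
    refine ⟨S, ?_, ?_, ?_⟩
    · intro q hq
      rw [hSdef] at hq
      obtain ⟨hmem, h1, h2, h3, h4⟩ := Finset.mem_filter.mp hq
      exact ⟨h1, hrun q.1 q.2 h1 h2 h3 h4⟩
    · intro q hq q' hq' hne
      rw [hSdef] at hq hq'
      obtain ⟨_, hq1, hq2, hq3, hq4⟩ := Finset.mem_filter.mp hq
      obtain ⟨_, hq1', hq2', hq3', hq4'⟩ := Finset.mem_filter.mp hq'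
      rw [Finset.disjoint_left]
      intro x hx hx'
      obtain ⟨ha, hb⟩ := Finset.mem_Icc.mp hx
      obtain ⟨ha', hb'⟩ := Finset.mem_Icc.mp hx'
      apply hne
      have he1 : q.1 = q'.1 := by
        by_contra hne1
        rcases Nat.lt_or_ge q.1 q'.1 with h | h
        · exact hq3' (hq2 (Finset.mem_Icc.mpr ⟨by omega, by omega⟩))
        · have h' : q'.1 < q.1 := by omega
          exact hq3 (hq2' (Finset.mem_Icc.mpr ⟨by omega, by omega⟩))
      have he2 : q.2 = q'.2 := by
        by_contra hne2
        rcases Nat.lt_or_ge q.2 q'.2 with h | h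
        · exact hq4 (hq2' (Finset.mem_Icc.mpr ⟨by omega, by omega⟩))
        · have h' : q'.2 < q.2 := by omega
          exact hq4' (hq2 (Finset.mem_Icc.mpr ⟨by omega, by omega⟩))
      exact Prod.ext he1 he2
    · apply Finset.Subset.antisymm
      · intro x hxB
        have hxI := hBsub hxB
        have hx1 : 1 ≤ x := (Finset.mem_Icc.mp hxI).1
        have hxm : x ≤ m := (Finset.mem_Icc.mp hxI).2
        have hxA : Finset.Icc x x ⊆ B := by
          intro y hy
          obtain ⟨h1, h2⟩ := Finset.mem_Icc.mp hy
          have hyx : y = x := by omega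
          rwa [hyx]
        set a := sInf {y : ℕ | Finset.Icc y x ⊆ B} with hadef
        have hAne : {y : ℕ | Finset.Icc y x ⊆ B}.Nonempty := ⟨x, hxA⟩
        have haA : Finset.Icc a x ⊆ B := Nat.sInf_mem hAne
        have hax : a ≤ x := Nat.sInf_le hxA
        have haB : a ∈ B := haA (Finset.mem_Icc.mpr ⟨le_refl _, hax⟩)
        have ha1 : 1 ≤ a := (Finset.mem_Icc.mp (hBsub haB)).1
        have haprev : (a - 1) ∉ B := by
          intro hmem
          have hsub : Finset.Icc (a - 1) x ⊆ B := by
            intro y hy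
            obtain ⟨h1, h2⟩ := Finset.mem_Icc.mp hy
            rcases Nat.eq_or_lt_of_le h1 with h | h
            · rw [← h]; exact hmem
            · exact haA (Finset.mem_Icc.mpr ⟨by omega, h2⟩)
          have : a ≤ a - 1 := Nat.sInf_le hsub
          omega
        have hCx : x ∈ {y : ℕ | x ≤ y ∧ Finset.Icc x y ⊆ B} := ⟨le_refl _, hxA⟩
        have hCbdd : BddAbove {y : ℕ | x ≤ y ∧ Finset.Icc x y ⊆ B} := by
          refine ⟨m, ?_⟩
          rintro y ⟨h1, h2⟩
          exact (Finset.mem_Icc.mp (hBsub (h2 (Finset.mem_Icc.mpr ⟨h1, le_refl _⟩)))).2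
        set c := sSup {y : ℕ | x ≤ y ∧ Finset.Icc x y ⊆ B} with hcdef
        have hcC : x ≤ c ∧ Finset.Icc x c ⊆ B := Nat.sSup_mem ⟨x, hCx⟩ hCbdd
        have hcnext : (c + 1) ∉ B := by
          intro hmem
          have hsub : Finset.Icc x (c + 1) ⊆ B := by
            intro y hy
            obtain ⟨h1, h2⟩ := Finset.mem_Icc.mp hy
            rcases Nat.eq_or_lt_of_le h2 with h | h
            · rw [h]; exact hmem
            · exact hcC.2 (Finset.mem_Icc.mpr ⟨h1, by omega⟩)
          have : c + 1 ≤ c := le_csSup hCbdd ⟨by omega, hsub⟩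
          omega
        have hcB : c ∈ B := hcC.2 (Finset.mem_Icc.mpr ⟨hcC.1, le_refl _⟩)
        have hacB : Finset.Icc a c ⊆ B := by
          intro y hy
          obtain ⟨h1, h2⟩ := Finset.mem_Icc.mp hy
          rcases le_or_gt y x with h | h
          · exact haA (Finset.mem_Icc.mpr ⟨h1, h⟩)
          · exact hcC.2 (Finset.mem_Icc.mpr ⟨by omega, h2⟩)
        have hSmem : (a, c) ∈ S := by
          rw [hSdef]
          refine Finset.mem_filter.mpr ⟨Finset.mem_product.mpr ⟨haB, hcB⟩, ?_, hacB, haprev, hcnext⟩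
          have := hcC.1; omega
        rw [Finset.mem_sup]
        exact ⟨(a, c), hSmem, Finset.mem_Icc.mpr ⟨hax, hcC.1⟩⟩
      · intro x hx
        rw [Finset.mem_sup] at hx
        obtain ⟨q, hq, hxq⟩ := hx
        rw [hSdef] at hq
        exact (Finset.mem_filter.mp hq).2.2.1 hxq
  exact ⟨main2, main3, main1⟩


private lemma circuit_card_le (m : ℕ) (P : Finset (Finset ℕ)) (b : ℕ)
    (hP : IsPartitionOf m P) (hb : P.card = b)
    (n : ℕ) (v : Fin (m + 1) → Fin n) (hv : v ∈ circuitsOf m P n) :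
    (Finset.univ.image v).card ≤ b + 1 := by
  classical
  simp only [circuitsOf, Finset.mem_filter, Finset.mem_univ, true_and] at hv
  set V : ℕ → Fin n := extFin v with hVdef
  obtain ⟨hVm0, hiff⟩ := hv
  set MM : Finset ℕ := P.image (fun B => sInf {s : ℕ | s ∈ B}) with hMMdef
  set T : Finset ℕ := insert 0 MM with hTdef
  set w : ℕ → ℕ := fun l => sInf {s : ℕ | s ∈ partOf P l} with hwdef
  have hT0 : (0 : ℕ) ∈ T := Finset.mem_insert_self 0 MM
  have hw_mem : ∀ {i : ℕ}, i ∈ Finset.Icc 1 m →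
      w i ∈ partOf P i ∧ w i ≤ i ∧ w i ∈ MM ∧ w i ∈ Finset.Icc 1 m ∧
      partOf P (w i) = partOf P i := by
    intro i hi
    obtain ⟨hPi, hiPi⟩ := partOf_spec hP hi
    have hne : {s : ℕ | s ∈ partOf P i}.Nonempty := ⟨i, hiPi⟩
    have hmem : w i ∈ partOf P i := Nat.sInf_mem hne
    have hle : w i ≤ i := Nat.sInf_le hiPi
    have hMM : w i ∈ MM := by
      rw [hMMdef]; exact Finset.mem_image_of_mem _ hPi
    have hIcc : w i ∈ Finset.Icc 1 m := hP.2.1 _ hPi hmem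
    exact ⟨hmem, hle, hMM, hIcc, partOf_eq_of_mem hP hPi hmem⟩
  have hedge : ∀ {i j : ℕ}, i ∈ Finset.Icc 1 m → j ∈ Finset.Icc 1 m →
      partOf P i = partOf P j →
      ({V (i - 1), V i} : Finset (Fin n)) = {V (j - 1), V j} :=
    fun {i j} hi hj h => (hiff i hi j hj).mp h
  have B1 : ∀ l, l ≤ m → ∃ t, t ∈ T ∧ t ≤ l ∧ V t = V l := by
    intro l
    induction l using Nat.strong_induction_on with
    | _ l IH =>
      intro hlm
      rcases Nat.eq_zero_or_pos l with rfl | hl1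
      · exact ⟨0, hT0, le_refl _, rfl⟩
      · have hlI : l ∈ Finset.Icc 1 m := Finset.mem_Icc.mpr ⟨hl1, hlm⟩
        obtain ⟨hwm, hwle, hwMM, hwIcc, hwpart⟩ := hw_mem hlI
        have hwT : w l ∈ T := by rw [hTdef]; exact Finset.mem_insert_of_mem hwMM
        rcases eq_or_lt_of_le hwle with heq | hlt
        · exact ⟨w l, hwT, hwle, by rw [heq]⟩
        · have hVl : V l ∈ ({V (w l - 1), V (w l)} : Finset (Fin n)) := by
            rw [← hedge hlI hwIcc hwpart.symm]
            simp
          simp only [Finset.mem_insert, Finset.mem_singleton] at hVl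
          rcases hVl with h | h
          · have hw1 : 1 ≤ w l := (Finset.mem_Icc.mp hwIcc).1
            obtain ⟨t, htT, htle, htV⟩ := IH (w l - 1) (by omega) (by omega)
            exact ⟨t, htT, by omega, by rw [htV, ← h]⟩
          · exact ⟨w l, hwT, hwle, h.symm⟩
  have himsub : Finset.univ.image v ⊆ T.image V := by
    intro x hx
    obtain ⟨a, _, rfl⟩ := Finset.mem_image.mp hx
    obtain ⟨t, htT, _, htV⟩ := B1 a.val (by omega)
    have hva : V a.val = v a := by
      rw [hVdef]
      show v _ = v a
      congr 1
      exact Fin.ext (Nat.mod_eq_of_lt a.isLt)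
    rw [← hva, ← htV]
    exact Finset.mem_image_of_mem _ htT
  calc (Finset.univ.image v).card ≤ (T.image V).card := Finset.card_le_card himsub
    _ ≤ T.card := Finset.card_image_le
    _ ≤ MM.card + 1 := Finset.card_insert_le _ _
    _ ≤ b + 1 := by
        have : MM.card ≤ P.card := by rw [hMMdef]; exact Finset.card_image_le
        omega

private lemma small_count (m b n : ℕ) :
    ((Finset.univ : Finset (Fin (m + 1) → Fin n)).filter
      (fun v => (Finset.univ.image v).card ≤ b)).card ≤ n ^ b * b ^ (m + 1) := by
  classical
  have hsub : ((Finset.univ : Finset (Fin (m + 1) → Fin n)).filter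
      (fun v => (Finset.univ.image v).card ≤ b))
      ⊆ (Finset.univ : Finset ((Fin b → Fin n) × (Fin (m + 1) → Fin b))).image
          (fun fg => fg.1 ∘ fg.2) := by
    intro v hv
    have hcard : (Finset.univ.image v).card ≤ b := (Finset.mem_filter.mp hv).2
    have hle : Fintype.card ↥(Finset.univ.image v) ≤ Fintype.card (Fin b) := by
      rw [Fintype.card_coe, Fintype.card_fin]; exact hcard
    obtain ⟨e⟩ := Function.Embedding.nonempty_of_card_le hle
    set g : Fin (m + 1) → Fin b :=
      fun x => e ⟨v x, Finset.mem_image_of_mem _ (Finset.mem_univ x)⟩ with hgdef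
    set f : Fin b → Fin n :=
      fun y => if h : ∃ a : ↥(Finset.univ.image v), e a = y then (h.choose : ↥(Finset.univ.image v)).val
        else v ⟨0, Nat.succ_pos m⟩ with hfdef
    refine Finset.mem_image.mpr ⟨(f, g), Finset.mem_univ _, ?_⟩
    funext x
    show f (g x) = v x
    have hex : ∃ a : ↥(Finset.univ.image v), e a =
        e ⟨v x, Finset.mem_image_of_mem _ (Finset.mem_univ x)⟩ :=
      ⟨⟨v x, Finset.mem_image_of_mem _ (Finset.mem_univ x)⟩, rfl⟩
    have hfg : f (g x) = (hex.choose : ↥(Finset.univ.image v)).val := by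
      rw [hfdef, hgdef]
      exact dif_pos hex
    rw [hfg]
    have := hex.choose_spec
    have heq := e.injective this
    rw [heq]
  calc ((Finset.univ : Finset (Fin (m + 1) → Fin n)).filter
        (fun v => (Finset.univ.image v).card ≤ b)).card
      ≤ ((Finset.univ : Finset ((Fin b → Fin n) × (Fin (m + 1) → Fin b))).image
          (fun fg => fg.1 ∘ fg.2)).card := Finset.card_le_card hsub
    _ ≤ (Finset.univ : Finset ((Fin b → Fin n) × (Fin (m + 1) → Fin b))).card :=
        Finset.card_image_le
    _ = n ^ b * b ^ (m + 1) := by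
        rw [Finset.card_univ, Fintype.card_prod, Fintype.card_fun, Fintype.card_fun]
        simp

/-- **Lemma.** If a word `ω` of length `2k` with `b` distinct letters satisfies
`|Π(ω)|/n^{b+1} → 1`, then (i) the last new letter appears only in pure blocks of even
sizes, (ii) in circuits with `b+1` distinct vertex values, successive occurrences of the
same letter satisfy the `(C2)` constraint, and (iii) between successive occurrences of any
letter every other letter appears equally often in odd and in even positions; consequently
`ω` is a special symmetric word. -/
theorem word_with_full_circuit_count_is_special_symmetric
    (k b : ℕ) (hk : 1 ≤ k) (P : Finset (Finset ℕ))
    (hP : IsPartitionOf (2 * k) P) (hb : P.card = b)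
    (hlim : Tendsto (fun n : ℕ => ((circuitsOf (2 * k) P n).card : ℝ) / (n : ℝ) ^ (b + 1))
      atTop (𝓝 1)) :
    (∀ B ∈ P, (∀ B' ∈ P, B' ≠ B → ∃ a ∈ B', ∀ c ∈ B, a < c) → IsEvenIntervalUnion B) ∧
    (∀ n : ℕ, ∀ v ∈ circuitsOf (2 * k) P n, (Finset.univ.image v).card = b + 1 →
      ∀ i ∈ Finset.Icc 1 (2 * k), ∀ j ∈ Finset.Icc 1 (2 * k), i < j →
        partOf P i = partOf P j →
        (∀ l ∈ Finset.Icc 1 (2 * k), i < l → l < j → partOf P l ≠ partOf P i) →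
        extFin v (i - 1) = extFin v j ∧ extFin v i = extFin v (j - 1)) ∧
    (∀ B ∈ P, ∀ i ∈ B, ∀ j ∈ B, i < j → (∀ l ∈ B, ¬(i < l ∧ l < j)) →
      ∀ B' ∈ P, B' ≠ B →
        (B'.filter fun l => i < l ∧ l < j ∧ Odd l).card
          = (B'.filter fun l => i < l ∧ l < j ∧ Even l).card) ∧
    IsSpecialSymmetric (2 * k) P := by
  classical
  have hbpos : 1 ≤ b := by
    rw [← hb]
    have h1 : (1 : ℕ) ∈ Finset.Icc 1 (2 * k) := Finset.mem_Icc.mpr ⟨le_refl _, by omega⟩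
    obtain ⟨B, hB, _⟩ := hP.2.2.2 1 h1
    exact Finset.card_pos.mpr ⟨B, hB⟩
  have hexist : ∃ n : ℕ, ∃ v ∈ circuitsOf (2 * k) P n,
      (Finset.univ.image v).card = b + 1 := by
    have hev : ∀ᶠ n : ℕ in atTop,
        (1 / 2 : ℝ) < ((circuitsOf (2 * k) P n).card : ℝ) / (n : ℝ) ^ (b + 1) :=
      hlim.eventually (eventually_gt_nhds (by norm_num))
    obtain ⟨N, hN⟩ := eventually_atTop.mp hev
    set n := max N (2 * b ^ (2 * k + 1) + 1) with hndef
    have hn1 : N ≤ n := le_max_left _ _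
    have hn2 : 2 * b ^ (2 * k + 1) + 1 ≤ n := le_max_right _ _
    have hnpos : 0 < n := by
      have : 0 < 2 * b ^ (2 * k + 1) + 1 := by positivity
      omega
    have hr := hN n hn1
    by_contra hcon
    push_neg at hcon
    have hall : circuitsOf (2 * k) P n ⊆ Finset.univ.filter
        (fun v : Fin (2 * k + 1) → Fin n => (Finset.univ.image v).card ≤ b) := by
      intro v hv
      refine Finset.mem_filter.mpr ⟨Finset.mem_univ _, ?_⟩
      have h1 := circuit_card_le (2 * k) P b hP hb n v hv
      have h2 := hcon n v hv
      omega
    have hle : (circuitsOf (2 * k) P n).card ≤ n ^ b * b ^ (2 * k + 1) :=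
      le_trans (Finset.card_le_card hall) (small_count (2 * k) b n)
    have hnR : (0 : ℝ) < (n : ℝ) ^ (b + 1) := by positivity
    rw [lt_div_iff₀ hnR] at hr
    have h4 : ((circuitsOf (2 * k) P n).card : ℝ) ≤ (n : ℝ) ^ b * (b : ℝ) ^ (2 * k + 1) := by
      exact_mod_cast hle
    have h5 : 2 * (b : ℝ) ^ (2 * k + 1) + 1 ≤ (n : ℝ) := by exact_mod_cast hn2
    have hnbpos : (0 : ℝ) < (n : ℝ) ^ b := by positivity
    have h6 : (n : ℝ) ^ (b + 1) = (n : ℝ) ^ b * (n : ℝ) := by rw [pow_succ]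
    have h7 : (n : ℝ) ^ b * (2 * (b : ℝ) ^ (2 * k + 1) + 1) ≤ (n : ℝ) ^ b * (n : ℝ) :=
      mul_le_mul_of_nonneg_left h5 hnbpos.le
    have h8 : (n : ℝ) ^ b * (2 * (b : ℝ) ^ (2 * k + 1) + 1)
        = 2 * ((n : ℝ) ^ b * (b : ℝ) ^ (2 * k + 1)) + (n : ℝ) ^ b := by ring
    rw [h6] at hr
    rw [h8] at h7
    linarith
  obtain ⟨n0, v0, hv0, himg0⟩ := hexist
  obtain ⟨s2, s3, s1⟩ := struct_main (2 * k) P b hP hb n0 v0 hv0 himg0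
  refine ⟨s1, ?_, s3, hP, s1, ?_⟩
  · intro n v hv himg i hi j hj hij hpart hbet
    exact (struct_main (2 * k) P b hP hb n v hv himg).1 i hi j hj hij hpart hbet
  · intro B hB i hi j hj hij hgap B' hB' hne
    have heq := s3 B hB i hi j hj hij hgap B' hB' hne
    have h1 : (B'.filter fun l => i < l ∧ l < j ∧ Odd l)
        = (B'.filter fun l => i < l ∧ l < j).filter (fun l => Odd l) := by
      ext x; simp [Finset.mem_filter, and_assoc]
    have h2 : (B'.filter fun l => i < l ∧ l < j ∧ Even l)
        = (B'.filter fun l => i < l ∧ l < j).filter (fun l => Even l) := by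
      ext x; simp [Finset.mem_filter, and_assoc]
    have h3 := Finset.card_filter_add_card_filter_not
      (s := B'.filter fun l => i < l ∧ l < j) (p := fun l => Odd l)
    have h4 : (B'.filter fun l => i < l ∧ l < j).filter (fun l => ¬ Odd l)
        = (B'.filter fun l => i < l ∧ l < j).filter (fun l => Even l) := by
      apply Finset.filter_congr; intro x _; simp [Nat.not_odd_iff_even]
    have hsplit : (B'.filter fun l => i < l ∧ l < j).card
        = (B'.filter fun l => i < l ∧ l < j ∧ Odd l).card
          + (B'.filter fun l => i < l ∧ l < j ∧ Even l).card := by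
      rw [h1, h2, ← h3, h4]
    constructor
    · rw [hsplit, heq]
      exact ⟨_, rfl⟩
    · exact heq
end

section
/- Let A and B be n×n real symmetric matrices, and let μ_A and μ_B denote their empirical spectral distributions. Then d_2(μ_A, μ_B)² ≤ (1/n)·Tr((A − B)²), where d_2 is the L²-Wasserstein distance between probability measures on ℝ with finite second moment. -/
open MeasureTheory ProbabilityTheory Filter Finset
open scoped BigOperators ENNReal NNReal Topology Classical

section HWaux
open Finset Matrix

lemma trace_conj_mul (n : ℕ) (U V : Matrix (Fin n) (Fin n) ℝ)
    (hU : U ∈ Matrix.unitaryGroup (Fin n) ℝ) (hV : V ∈ Matrix.unitaryGroup (Fin n) ℝ)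
    (d e : Fin n → ℝ) :
    ((U * diagonal d * star U) * (V * diagonal e * star V)).trace
      = ∑ i, ∑ j, d i * e j * ((star U * V) i j) ^ 2 := by
  have h1 : (U * diagonal d * star U) * (V * diagonal e * star V)
      = U * (diagonal d * ((star U * V) * diagonal e * star (star U * V))) * star U := by
    simp only [StarMul.star_mul, star_star]
    simp only [Matrix.mul_assoc, Matrix.mem_unitaryGroup_iff.mp hU, Matrix.mul_one]
  rw [h1, Matrix.trace_mul_cycle, ← Matrix.mul_assoc, Matrix.mem_unitaryGroup_iff'.mp hU,
    Matrix.one_mul]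
  rw [Matrix.trace]
  refine Finset.sum_congr rfl fun i _ => ?_
  rw [Matrix.diag_apply, Matrix.diagonal_mul, Matrix.mul_apply, Finset.mul_sum]
  refine Finset.sum_congr rfl fun j _ => ?_
  simp only [Matrix.mul_diagonal, Matrix.star_apply, star_trivial]
  ring

lemma hw_perm (n : ℕ) (A B : Matrix (Fin n) (Fin n) ℝ)
    (hA : A.IsHermitian) (hB : B.IsHermitian) :
    ∃ σ : Equiv.Perm (Fin n),
      ∑ i, (hA.eigenvalues i - hB.eigenvalues (σ i)) ^ 2 ≤ ((A - B) ^ 2).trace := by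
  classical
  set l := hA.eigenvalues with hl
  set m := hB.eigenvalues with hm
  set U := (hA.eigenvectorUnitary : Matrix (Fin n) (Fin n) ℝ) with hU
  set V := (hB.eigenvectorUnitary : Matrix (Fin n) (Fin n) ℝ) with hV
  have hUmem : U ∈ Matrix.unitaryGroup (Fin n) ℝ := hA.eigenvectorUnitary.2
  have hVmem : V ∈ Matrix.unitaryGroup (Fin n) ℝ := hB.eigenvectorUnitary.2
  have hofA : (RCLike.ofReal ∘ l : Fin n → ℝ) = l := by ext i; simp
  have hofB : (RCLike.ofReal ∘ m : Fin n → ℝ) = m := by ext i; simp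
  have specA : A = U * diagonal l * star U := by
    have := hA.spectral_theorem; rwa [hofA] at this
  have specB : B = V * diagonal m * star V := by
    have := hB.spectral_theorem; rwa [hofB] at this
  set W := star U * V with hW
  have hWmem : W ∈ Matrix.unitaryGroup (Fin n) ℝ :=
    mul_mem (Unitary.star_mem hUmem) hVmem
  -- row and column sums of squares
  have hrow : ∀ i, ∑ j, (W i j) ^ 2 = 1 := by
    intro i
    have h1 : (W * star W) i i = (1 : Matrix (Fin n) (Fin n) ℝ) i i := by
      rw [Matrix.mem_unitaryGroup_iff.mp hWmem]
    rw [Matrix.mul_apply] at h1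
    simp only [Matrix.star_apply, star_trivial, Matrix.one_apply_eq] at h1
    rw [← h1]
    exact Finset.sum_congr rfl fun j _ => (sq (W i j)).symm ▸ rfl
  have hcol : ∀ j, ∑ i, (W i j) ^ 2 = 1 := by
    intro j
    have h1 : (star W * W) j j = (1 : Matrix (Fin n) (Fin n) ℝ) j j := by
      rw [Matrix.mem_unitaryGroup_iff'.mp hWmem]
    rw [Matrix.mul_apply] at h1
    simp only [Matrix.star_apply, star_trivial, Matrix.one_apply_eq] at h1
    rw [← h1]
    exact Finset.sum_congr rfl fun i _ => by ring
  set D : Matrix (Fin n) (Fin n) ℝ := Matrix.of fun i j => (W i j) ^ 2 with hD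
  have hDmem : D ∈ doublyStochastic ℝ (Fin n) := by
    rw [mem_doublyStochastic_iff_sum]
    exact ⟨fun i j => sq_nonneg _, hrow, hcol⟩
  -- traces
  have tAB : (A * B).trace = ∑ i, ∑ j, l i * m j * (W i j) ^ 2 := by
    rw [specA, specB]; exact trace_conj_mul n U V hUmem hVmem l m
  have tAA : (A * A).trace = ∑ i, l i ^ 2 := by
    rw [specA, trace_conj_mul n U U hUmem hUmem l l,
      show star U * U = 1 from Matrix.mem_unitaryGroup_iff'.mp hUmem]
    simp [Matrix.one_apply, ite_pow, mul_ite, sq]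
  have tBB : (B * B).trace = ∑ i, m i ^ 2 := by
    rw [specB, trace_conj_mul n V V hVmem hVmem m m,
      show star V * V = 1 from Matrix.mem_unitaryGroup_iff'.mp hVmem]
    simp [Matrix.one_apply, ite_pow, mul_ite, sq]
  -- Birkhoff
  obtain ⟨w, hw0, hw1, hwsum⟩ := exists_eq_sum_perm_of_mem_doublyStochastic hDmem
  have hDij : ∀ i j, D i j = ∑ σ : Equiv.Perm (Fin n), if σ i = j then w σ else 0 := by
    intro i j
    rw [← hwsum]
    simp [Matrix.sum_apply, Equiv.Perm.permMatrix, PEquiv.toMatrix_apply, Equiv.toPEquiv_apply,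
      mul_ite]
  have key : (A * B).trace = ∑ σ : Equiv.Perm (Fin n), w σ * ∑ i, l i * m (σ i) := by
    rw [tAB]
    have h2 : ∀ i, ∑ j, l i * m j * (W i j) ^ 2
        = ∑ σ : Equiv.Perm (Fin n), w σ * (l i * m (σ i)) := by
      intro i
      have e1 : ∀ j, l i * m j * (W i j) ^ 2
          = ∑ σ : Equiv.Perm (Fin n), if σ i = j then w σ * (l i * m j) else 0 := by
        intro j
        rw [show (W i j) ^ 2 = D i j from rfl, hDij i j, Finset.mul_sum]
        exact Finset.sum_congr rfl fun σ _ => by split <;> ring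
      simp_rw [e1]
      rw [Finset.sum_comm]
      refine Finset.sum_congr rfl fun σ _ => ?_
      rw [Finset.sum_ite_eq]
      simp
    rw [Finset.sum_congr rfl fun i _ => h2 i, Finset.sum_comm]
    refine Finset.sum_congr rfl fun σ _ => ?_
    rw [Finset.mul_sum]
  obtain ⟨σ, -, hσ⟩ := Finset.exists_max_image Finset.univ
    (fun σ : Equiv.Perm (Fin n) => ∑ i, l i * m (σ i)) ⟨1, Finset.mem_univ 1⟩
  have hABle : (A * B).trace ≤ ∑ i, l i * m (σ i) := by
    rw [key]
    calc ∑ σ' : Equiv.Perm (Fin n), w σ' * ∑ i, l i * m (σ' i)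
        ≤ ∑ σ' : Equiv.Perm (Fin n), w σ' * ∑ i, l i * m (σ i) :=
          Finset.sum_le_sum fun σ' _ =>
            mul_le_mul_of_nonneg_left (hσ σ' (Finset.mem_univ _)) (hw0 σ')
      _ = ∑ i, l i * m (σ i) := by rw [← Finset.sum_mul, hw1, one_mul]
  have hBA : (B * A).trace = (A * B).trace := Matrix.trace_mul_comm B A
  have expand : ((A - B) ^ 2).trace = (A * A).trace - 2 * (A * B).trace + (B * B).trace := by
    have h3 : (A - B) ^ 2 = A * A - A * B - B * A + B * B := by noncomm_ring
    rw [h3, Matrix.trace_add, Matrix.trace_sub, Matrix.trace_sub, hBA]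
    ring
  have hperm : ∑ i, m (σ i) ^ 2 = ∑ i, m i ^ 2 := Equiv.sum_comp σ fun i => m i ^ 2
  refine ⟨σ, ?_⟩
  have expand2 : ∑ i, (l i - m (σ i)) ^ 2
      = (∑ i, l i ^ 2) + (∑ i, m i ^ 2) - 2 * ∑ i, l i * m (σ i) := by
    rw [← hperm, ← Finset.sum_add_distrib, Finset.mul_sum, ← Finset.sum_sub_distrib]
    exact Finset.sum_congr rfl fun i _ => by ring
  rw [expand, expand2, tAA, tBB]
  linarith

end HWaux

section WassersteinESD

open MeasureTheory Matrix Finset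

private lemma integrable_dirac_sq (p : ℝ × ℝ) :
    Integrable (fun q : ℝ × ℝ => (q.1 - q.2) ^ 2) (Measure.dirac p) := by
  refine ⟨((continuous_fst.sub continuous_snd).pow 2).aestronglyMeasurable, ?_⟩
  rw [HasFiniteIntegral, lintegral_dirac]
  exact ENNReal.coe_lt_top

private lemma map_sum_dirac {n : ℕ} (pt : Fin n → ℝ × ℝ) (f : ℝ × ℝ → ℝ)
    (hf : Measurable f) :
    Measure.map f (∑ i : Fin n, Measure.dirac (pt i)) = ∑ i : Fin n, Measure.dirac (f (pt i)) := by
  ext s hs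
  rw [Measure.map_apply hf hs, Measure.finset_sum_apply, Measure.finset_sum_apply]
  exact Finset.sum_congr rfl fun i _ => by
    rw [← Measure.map_apply hf hs, Measure.map_dirac' hf]

/-- **Lemma.** For `n × n` real symmetric matrices `A` and `B`,
`d_2(μ_A, μ_B)² ≤ (1/n) Tr((A − B)²)`, where `d_2` is the `L²`-Wasserstein distance and
`μ_A`, `μ_B` are the empirical spectral distributions. -/
theorem wasserstein_esd_bound (n : ℕ) (A B : Matrix (Fin n) (Fin n) ℝ)
    (hA : A.IsHermitian) (hB : B.IsHermitian) :
    d2sq (esdOfMatrix A) (esdOfMatrix B) ≤ (1 / n : ℝ) * ((A - B) ^ 2).trace := by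
  classical
  have hbdd : BddBelow {r : ℝ | ∃ ρ : Measure (ℝ × ℝ), IsProbabilityMeasure ρ ∧
      ρ.map Prod.fst = esdOfMatrix A ∧ ρ.map Prod.snd = esdOfMatrix B ∧
      Integrable (fun q : ℝ × ℝ => (q.1 - q.2) ^ 2) ρ ∧
      r = ∫ q : ℝ × ℝ, (q.1 - q.2) ^ 2 ∂ρ} := by
    refine ⟨0, fun r hr => ?_⟩
    obtain ⟨ρ, -, -, -, -, hr⟩ := hr
    rw [hr]
    exact integral_nonneg fun q => sq_nonneg _
  rcases Nat.eq_zero_or_pos n with h0 | hpos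
  · subst h0
    have hempty : {r : ℝ | ∃ ρ : Measure (ℝ × ℝ), IsProbabilityMeasure ρ ∧
        ρ.map Prod.fst = esdOfMatrix A ∧ ρ.map Prod.snd = esdOfMatrix B ∧
        Integrable (fun q : ℝ × ℝ => (q.1 - q.2) ^ 2) ρ ∧
        r = ∫ q : ℝ × ℝ, (q.1 - q.2) ^ 2 ∂ρ} = ∅ := by
      ext r
      simp only [Set.mem_setOf_eq, Set.mem_empty_iff_false, iff_false, not_exists]
      rintro ρ ⟨hρ, hfst, -, -, -⟩
      have h1 : esdOfMatrix A Set.univ = 0 := by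
        rw [esdOfMatrix, dif_pos hA]
        simp
      have h2 : (ρ.map Prod.fst) Set.univ = 1 := by
        haveI := Measure.isProbabilityMeasure_map (μ := ρ) measurable_fst.aemeasurable
        exact measure_univ
      rw [hfst, h1] at h2
      exact one_ne_zero h2.symm
    rw [d2sq, hempty, Real.sInf_empty]
    simp
  · obtain ⟨σ, hσ⟩ := hw_perm n A B hA hB
    set l := hA.eigenvalues with hl
    set m := hB.eigenvalues with hm
    have hn0 : (n : ℝ≥0∞) ≠ 0 := Nat.cast_ne_zero.mpr hpos.ne'
    have hnt : (n : ℝ≥0∞) ≠ ⊤ := ENNReal.natCast_ne_top n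
    set c : ℝ≥0∞ := (n : ℝ≥0∞)⁻¹ with hc
    have hc0 : c ≠ 0 := ENNReal.inv_ne_zero.mpr hnt
    have hct : c ≠ ⊤ := ENNReal.inv_ne_top.mpr hn0
    set pt : Fin n → ℝ × ℝ := fun i => (l i, m (σ i)) with hpt
    set ρ : Measure (ℝ × ℝ) := c • ∑ i : Fin n, Measure.dirac (pt i) with hρ
    have hprob : IsProbabilityMeasure ρ := by
      constructor
      rw [hρ, Measure.smul_apply, Measure.finset_sum_apply]
      simp only [measure_univ, Finset.sum_const, Finset.card_univ, Fintype.card_fin,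
        nsmul_eq_mul, mul_one, smul_eq_mul]
      exact ENNReal.inv_mul_cancel hn0 hnt
    have hfst : ρ.map Prod.fst = esdOfMatrix A := by
      rw [hρ, Measure.map_smul, map_sum_dirac pt Prod.fst measurable_fst, esdOfMatrix, dif_pos hA]
    have hsnd : ρ.map Prod.snd = esdOfMatrix B := by
      rw [hρ, Measure.map_smul, map_sum_dirac pt Prod.snd measurable_snd, esdOfMatrix, dif_pos hB]
      congr 1
      exact Equiv.sum_comp σ fun i => Measure.dirac (m i)
    have hint : Integrable (fun q : ℝ × ℝ => (q.1 - q.2) ^ 2) ρ := by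
      rw [hρ, integrable_smul_measure hc0 hct]
      exact integrable_finset_sum_measure.mpr fun i _ => integrable_dirac_sq (pt i)
    have hval : (∫ q : ℝ × ℝ, (q.1 - q.2) ^ 2 ∂ρ)
        = (1 / n : ℝ) * ∑ i, (l i - m (σ i)) ^ 2 := by
      rw [hρ, integral_smul_measure,
        integral_finset_sum_measure fun i _ => integrable_dirac_sq (pt i)]
      simp only [integral_dirac]
      rw [hc, ENNReal.toReal_inv, ENNReal.toReal_natCast, smul_eq_mul, one_div]
    have hmem : (∫ q : ℝ × ℝ, (q.1 - q.2) ^ 2 ∂ρ) ∈ {r : ℝ | ∃ ρ : Measure (ℝ × ℝ),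
        IsProbabilityMeasure ρ ∧
        ρ.map Prod.fst = esdOfMatrix A ∧ ρ.map Prod.snd = esdOfMatrix B ∧
        Integrable (fun q : ℝ × ℝ => (q.1 - q.2) ^ 2) ρ ∧
        r = ∫ q : ℝ × ℝ, (q.1 - q.2) ^ 2 ∂ρ} :=
      ⟨ρ, hprob, hfst, hsnd, hint, rfl⟩
    calc d2sq (esdOfMatrix A) (esdOfMatrix B) ≤ ∫ q : ℝ × ℝ, (q.1 - q.2) ^ 2 ∂ρ :=
        csInf_le hbdd hmem
      _ = (1 / n : ℝ) * ∑ i, (l i - m (σ i)) ^ 2 := hval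
      _ ≤ (1 / n : ℝ) * ((A - B) ^ 2).trace := by
          apply mul_le_mul_of_nonneg_left hσ
          positivity

end WassersteinESD
end
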